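/- Fix f0 ∈ (1/2, 1]. The pumping-policy fidelity sequence (f_r)_{r≥0} converges, and lim_{r→∞} f_r = (−3 + 6·f0 + √(7 − 26·f0 + 28·f0²)) / (−2 + 8·f0). -/

import Mathlib

/-- The pumping-policy fidelity sequence: `f 0 = f0` and
`f (r+1) = ((10 f0 - 1) f r + (1 - f0)) / ((8 f0 - 2) f r + (5 - 2 f0))`. -/
noncomputable def pumping (f0 : ℝ) : ℕ → ℝ
  | 0 => f0
  | r + 1 =>
      ((10 * f0 - 1) * pumping f0 r + (1 - f0)) /
        ((8 * f0 - 2) * pumping f0 r + (5 - 2 * f0))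

theorem stmt_2 (f0 : ℝ) (hf0 : f0 ∈ Set.Ioc (1/2 : ℝ) 1) :
    Filter.Tendsto (pumping f0) Filter.atTop
      (nhds ((-3 + 6 * f0 + Real.sqrt (7 - 26 * f0 + 28 * f0 ^ 2)) / (-2 + 8 * f0))) := by
  obtain ⟨h1, h2⟩ := hf0
  have hDpos : (0:ℝ) < 7 - 26 * f0 + 28 * f0 ^ 2 := by nlinarith
  set s := Real.sqrt (7 - 26 * f0 + 28 * f0 ^ 2) with hsdef
  have hs2 : s ^ 2 = 7 - 26 * f0 + 28 * f0 ^ 2 := Real.sq_sqrt hDpos.le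
  have hspos : 0 < s := Real.sqrt_pos.mpr hDpos
  set L := (-3 + 6 * f0 + s) / (-2 + 8 * f0) with hLdef
  have hden : (0:ℝ) < -2 + 8 * f0 := by linarith
  have hLs : (-2 + 8 * f0) * L = -3 + 6 * f0 + s := by
    rw [hLdef]; field_simp
  have hquad : (8*f0-2)*L^2 + (6-12*f0)*L - (1-f0) = 0 := by
    have h := hLs
    nlinarith [hLs, hs2, sq_nonneg L]
  clear_value s L
  -- invariance of (1/2, 1]
  have hinv : ∀ r, 1/2 < pumping f0 r ∧ pumping f0 r ≤ 1 := by
    intro r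
    induction r with
    | zero => exact ⟨h1, h2⟩
    | succ r ih =>
      obtain ⟨hl, hu⟩ := ih
      have hdpos : 0 < (8*f0-2) * pumping f0 r + (5-2*f0) := by nlinarith
      constructor
      · show 1/2 < pumping f0 (r+1)
        rw [pumping, lt_div_iff₀ hdpos]
        nlinarith
      · show pumping f0 (r+1) ≤ 1
        rw [pumping, div_le_one hdpos]
        nlinarith
  -- one-step identity
  have hiter : ∀ r, pumping f0 (r+1) - L =
      (4*f0 + 2 - s) / ((8*f0-2) * pumping f0 r + (5-2*f0)) * (pumping f0 r - L) := by
    intro r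
    have hdpos : 0 < (8*f0-2) * pumping f0 r + (5-2*f0) := by
      have := (hinv r).1; nlinarith
    have hnum : (10*f0-1) * pumping f0 r + (1-f0)
        - L * ((8*f0-2) * pumping f0 r + (5-2*f0))
        = (4*f0 + 2 - s) * (pumping f0 r - L) := by
      linear_combination (L - pumping f0 r) * hLs - hquad
    have hstep : pumping f0 (r+1) - L
        = ((10*f0-1) * pumping f0 r + (1-f0)
            - L * ((8*f0-2) * pumping f0 r + (5-2*f0)))
          / ((8*f0-2) * pumping f0 r + (5-2*f0)) := by
      rw [pumping]
      rw [sub_div, mul_div_cancel_right₀ _ hdpos.ne']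
    rw [hstep, hnum]
    ring
  set c := (4*f0 + 2 - s) / (2*f0 + 4) with hcdef
  have hden2 : (0:ℝ) < 2*f0 + 4 := by linarith
  have hslt : s < 4*f0 + 2 := by nlinarith [hspos, hs2]
  have hc0 : 0 ≤ c := by
    apply div_nonneg _ hden2.le; linarith
  have hc1 : c < 1 := by
    rw [hcdef, div_lt_one hden2]; linarith
  -- geometric bound
  have hbound : ∀ r, |pumping f0 r - L| ≤ c ^ r * |f0 - L| := by
    intro r
    induction r with
    | zero => simp [pumping]
    | succ r ih =>
      have hl := (hinv r).1
      have hdpos : 0 < (8*f0-2) * pumping f0 r + (5-2*f0) := by nlinarith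
      have hdge : 2*f0 + 4 ≤ (8*f0-2) * pumping f0 r + (5-2*f0) := by nlinarith
      have hk : (4*f0 + 2 - s) / ((8*f0-2) * pumping f0 r + (5-2*f0)) ≤ c := by
        rw [hcdef]
        apply div_le_div_of_nonneg_left (by linarith) hden2 hdge
      have hk0 : 0 ≤ (4*f0 + 2 - s) / ((8*f0-2) * pumping f0 r + (5-2*f0)) :=
        div_nonneg (by linarith) hdpos.le
      calc |pumping f0 (r+1) - L|
          = (4*f0 + 2 - s) / ((8*f0-2) * pumping f0 r + (5-2*f0)) * |pumping f0 r - L| := by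
            rw [hiter r, abs_mul, abs_of_nonneg hk0]
        _ ≤ c * (c ^ r * |f0 - L|) := by
            apply mul_le_mul hk ih (abs_nonneg _)
            exact hc0
        _ = c ^ (r+1) * |f0 - L| := by ring
  -- conclude
  rw [tendsto_iff_norm_sub_tendsto_zero]
  have htend : Filter.Tendsto (fun r => c ^ r * |f0 - L|) Filter.atTop (nhds 0) := by
    have := tendsto_pow_atTop_nhds_zero_of_lt_one hc0 hc1
    simpa using this.mul_const |f0 - L|
  apply squeeze_zero (fun r => norm_nonneg _) _ htend
  intro r
  simpa [Real.norm_eq_abs] using hbound r
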